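/- Let C ∈ ℝ^{p×p}, η > 0 with 4η²λ_max(CCᵀ) ≤ 1. Define J = [[0, C],[-Cᵀ, 0]], S = diag((I-4η²CCᵀ)^{1/2}, (I-4η²CᵀC)^{1/2}), R₁ = ((I - 2ηJ) + S)/2 and R₂ = ((I - 2ηJ) - S)/2. Then R₁ + R₂ = I - 2ηJ and R₁R₂ = R₂R₁ = -ηJ. -/

import Mathlib

open Matrix
noncomputable section

/-- Largest eigenvalue (for symmetric matrices: sup of real spectrum). -/
def lamMax {n : Type*} [Fintype n] [DecidableEq n] (M : Matrix n n ℝ) : ℝ :=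
  sSup (spectrum ℝ M)

/-- Smallest eigenvalue (for symmetric matrices: inf of real spectrum). -/
def lamMin {n : Type*} [Fintype n] [DecidableEq n] (M : Matrix n n ℝ) : ℝ :=
  sInf (spectrum ℝ M)

/-- Operator (spectral) norm of a square real matrix. -/
def opNorm {n : Type*} [Fintype n] [DecidableEq n] (M : Matrix n n ℝ) : ℝ :=
  ‖toEuclideanCLM (𝕜 := ℝ) M‖

open Classical in
/-- Positive semidefinite square root (junk value `0` if `M` is not PSD). -/
def msqrt {n : Type*} [Fintype n] [DecidableEq n] (M : Matrix n n ℝ) : Matrix n n ℝ :=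
  if h : M.PosSemidef then
    h.1.eigenvectorUnitary.1 * diagonal ((↑) ∘ (√·) ∘ h.1.eigenvalues) *
      (star h.1.eigenvectorUnitary : Matrix n n ℝ) else 0

open Polynomial

def Matrix.PosSemidef.sqrt {n : Type*} [Fintype n] [DecidableEq n] {M : Matrix n n ℝ}
    (h : M.PosSemidef) : Matrix n n ℝ :=
  h.1.eigenvectorUnitary.1 * diagonal ((↑) ∘ (√·) ∘ h.1.eigenvalues) *
    (star h.1.eigenvectorUnitary : Matrix n n ℝ)

lemma Matrix.PosSemidef.posSemidef_sqrt {n : Type*} [Fintype n] [DecidableEq n]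
    {M : Matrix n n ℝ} (h : M.PosSemidef) : h.sqrt.PosSemidef := by
  rw [Matrix.PosSemidef.sqrt, show star (h.1.eigenvectorUnitary : Matrix n n ℝ)
    = (h.1.eigenvectorUnitary : Matrix n n ℝ)ᴴ from rfl]
  exact (Matrix.posSemidef_diagonal_iff.mpr
    (fun i => by simp [Real.sqrt_nonneg])).mul_mul_conjTranspose_same _

lemma Matrix.PosSemidef.sqrt_mul_self {n : Type*} [Fintype n] [DecidableEq n]
    {M : Matrix n n ℝ} (h : M.PosSemidef) : h.sqrt * h.sqrt = M := by
  have hU : star (h.1.eigenvectorUnitary : Matrix n n ℝ) * (h.1.eigenvectorUnitary : Matrix n n ℝ)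
    = 1 := Unitary.coe_star_mul_self _
  rw [Matrix.PosSemidef.sqrt]
  conv_rhs => rw [h.1.spectral_theorem, Unitary.conjStarAlgAut_apply]
  simp only [mul_assoc]
  rw [← mul_assoc (star (h.1.eigenvectorUnitary : Matrix n n ℝ)), hU, one_mul,
    ← mul_assoc (diagonal _) (diagonal _), diagonal_mul_diagonal]
  congr 3
  funext i
  simp [Real.mul_self_sqrt (h.eigenvalues_nonneg i)]



lemma myAevalDiagonal {n : Type*} [Fintype n] [DecidableEq n] (d : n → ℝ) (q : ℝ[X]) :
    aeval (Matrix.diagonal d) q = Matrix.diagonal (fun i => q.eval (d i)) := by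
  induction q using Polynomial.induction_on' with
  | add q r hq hr =>
      rw [map_add, hq, hr]
      ext i j
      by_cases hij : i = j <;> simp [Matrix.diagonal, hij]
  | monomial k a =>
      rw [aeval_monomial, Matrix.diagonal_pow, Algebra.algebraMap_eq_smul_one]
      ext i j
      by_cases hij : i = j <;> simp [Matrix.diagonal, hij]

lemma myConjPow {n : Type*} [Fintype n] [DecidableEq n] (U : Matrix.unitaryGroup n ℝ)
    (D : Matrix n n ℝ) (k : ℕ) :
    ((U : Matrix n n ℝ) * D * star (U : Matrix n n ℝ)) ^ k
      = (U : Matrix n n ℝ) * D ^ k * star (U : Matrix n n ℝ) := by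
  induction k with
  | zero => simp [Unitary.coe_mul_star_self]
  | succ k ih =>
      have h1 : star (U : Matrix n n ℝ) * (U : Matrix n n ℝ) = 1 := Unitary.coe_star_mul_self U
      rw [pow_succ, ih, pow_succ]
      simp only [mul_assoc]
      rw [← mul_assoc (star (U : Matrix n n ℝ)) (U : Matrix n n ℝ), h1, one_mul]

lemma myAevalConj {n : Type*} [Fintype n] [DecidableEq n] (U : Matrix.unitaryGroup n ℝ)
    (D : Matrix n n ℝ) (q : ℝ[X]) :
    aeval ((U : Matrix n n ℝ) * D * star (U : Matrix n n ℝ)) q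
      = (U : Matrix n n ℝ) * aeval D q * star (U : Matrix n n ℝ) := by
  induction q using Polynomial.induction_on' with
  | add q r hq hr => rw [map_add, map_add, hq, hr, mul_add, add_mul]
  | monomial k a =>
      rw [aeval_monomial, aeval_monomial, myConjPow, Algebra.algebraMap_eq_smul_one]
      simp only [smul_mul_assoc, one_mul, mul_smul_comm]

lemma myAevalIntertwine {n : Type*} [Fintype n] [DecidableEq n]
    (B M₁ M₂ : Matrix n n ℝ) (h : B * M₂ = M₁ * B) (q : ℝ[X]) :
    B * aeval M₂ q = aeval M₁ q * B := by
  have hpow : ∀ k : ℕ, B * M₂ ^ k = M₁ ^ k * B := by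
    intro k
    induction k with
    | zero => simp
    | succ k ih => rw [pow_succ, pow_succ, ← mul_assoc, ih, mul_assoc, h, ← mul_assoc]
  induction q using Polynomial.induction_on' with
  | add q r hq hr => rw [map_add, map_add, mul_add, add_mul, hq, hr]
  | monomial k a =>
      rw [aeval_monomial, aeval_monomial, Algebra.algebraMap_eq_smul_one]
      simp only [smul_mul_assoc, one_mul, mul_smul_comm, hpow]

lemma mySqrtEqAeval {n : Type*} [Fintype n] [DecidableEq n] {M : Matrix n n ℝ}
    (hM : M.PosSemidef) (q : ℝ[X])
    (hq : ∀ i, q.eval (hM.1.eigenvalues i) = Real.sqrt (hM.1.eigenvalues i)) :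
    aeval M q = hM.sqrt := by
  conv_lhs => rw [hM.1.spectral_theorem, Unitary.conjStarAlgAut_apply]
  rw [myAevalConj, myAevalDiagonal, Matrix.PosSemidef.sqrt]
  have hfun : (fun i => Polynomial.eval ((RCLike.ofReal ∘ hM.1.eigenvalues) i) q)
      = (RCLike.ofReal ∘ Real.sqrt ∘ hM.1.eigenvalues : n → ℝ) := by
    funext i; simpa using hq i
  rw [hfun]
  rfl

lemma myPsdOneSubSmul {n : Type*} [Fintype n] [DecidableEq n] {A : Matrix n n ℝ}
    (hA : A.IsHermitian) {c : ℝ} (hc : ∀ i, c * hA.eigenvalues i ≤ 1) :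
    ((1 : Matrix n n ℝ) - c • A).PosSemidef := by
  have hU : (hA.eigenvectorUnitary : Matrix n n ℝ) * star (hA.eigenvectorUnitary : Matrix n n ℝ)
      = 1 := Unitary.coe_mul_star_self _
  have key : (1 : Matrix n n ℝ) - c • A =
      (hA.eigenvectorUnitary : Matrix n n ℝ) *
        Matrix.diagonal (fun i => 1 - c * hA.eigenvalues i) *
        star (hA.eigenvectorUnitary : Matrix n n ℝ) := by
    have hdiag : Matrix.diagonal (fun i => 1 - c * hA.eigenvalues i)
        = 1 - c • Matrix.diagonal (RCLike.ofReal ∘ hA.eigenvalues) := by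
      ext i j
      by_cases hij : i = j <;> simp [Matrix.diagonal, Matrix.one_apply, hij]
    rw [hdiag, mul_sub, sub_mul, mul_smul_comm, smul_mul_assoc, mul_one, hU]
    conv_lhs => rw [hA.spectral_theorem, Unitary.conjStarAlgAut_apply]
  rw [key, show star (hA.eigenvectorUnitary : Matrix n n ℝ)
    = (hA.eigenvectorUnitary : Matrix n n ℝ)ᴴ from rfl]
  exact (Matrix.posSemidef_diagonal_iff.mpr
    (fun i => sub_nonneg.mpr (hc i))).mul_mul_conjTranspose_same _

lemma myKey {M : Type*} [Ring M] (A S : M) (hc : A * S = S * A) :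
    (A + S) * (A - S) = A * A - S * S ∧ (A - S) * (A + S) = A * A - S * S := by
  constructor
  · rw [add_mul, mul_sub, mul_sub, hc]; abel
  · rw [sub_mul, mul_add, mul_add, hc]; abel


theorem stmt7 {p : ℕ} (C : Matrix (Fin p) (Fin p) ℝ) (η : ℝ) (hη : 0 < η)
    (h : 4 * η ^ 2 * lamMax (C * Cᵀ) ≤ 1)
    (J S R₁ R₂ : Matrix (Fin p ⊕ Fin p) (Fin p ⊕ Fin p) ℝ)
    (hJ : J = fromBlocks 0 C (-Cᵀ) 0)
    (hS : S = fromBlocks (msqrt (1 - (4 * η ^ 2) • (C * Cᵀ))) 0 0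
      (msqrt (1 - (4 * η ^ 2) • (Cᵀ * C))))
    (hR₁ : R₁ = (1 / 2 : ℝ) • ((1 - (2 * η) • J) + S))
    (hR₂ : R₂ = (1 / 2 : ℝ) • ((1 - (2 * η) • J) - S)) :
    R₁ + R₂ = 1 - (2 * η) • J ∧ R₁ * R₂ = -(η • J) ∧ R₂ * R₁ = -(η • J) := by
  classical
  have hc0 : (0 : ℝ) ≤ 4 * η ^ 2 := by positivity
  have hCt : Cᴴ = Cᵀ := Matrix.conjTranspose_eq_transpose_of_trivial C
  have hA₁ : (C * Cᵀ).PosSemidef := hCt ▸ Matrix.posSemidef_self_mul_conjTranspose C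
  have hA₂ : (Cᵀ * C).PosSemidef := hCt ▸ Matrix.posSemidef_conjTranspose_mul_self C
  have hbdd : BddAbove (spectrum ℝ (C * Cᵀ)) := (Matrix.finite_real_spectrum).bddAbove
  have hspec : ∀ x : ℝ, x ∈ spectrum ℝ (C * Cᵀ) → 4 * η ^ 2 * x ≤ 1 := fun x hx =>
    le_trans (mul_le_mul_of_nonneg_left (le_csSup hbdd hx) hc0) h
  have hM₁ : ((1 : Matrix (Fin p) (Fin p) ℝ) - (4 * η ^ 2) • (C * Cᵀ)).PosSemidef :=
    myPsdOneSubSmul hA₁.1 (fun i => hspec _ (hA₁.1.eigenvalues_mem_spectrum_real i))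
  have hM₂ : ((1 : Matrix (Fin p) (Fin p) ℝ) - (4 * η ^ 2) • (Cᵀ * C)).PosSemidef := by
    refine myPsdOneSubSmul hA₂.1 (fun i => ?_)
    rcases eq_or_ne (hA₂.1.eigenvalues i) 0 with h0 | h0
    · simp [h0]
    · have hmem : hA₂.1.eigenvalues i ∈ spectrum ℝ (Cᵀ * C) \ {0} :=
        ⟨hA₂.1.eigenvalues_mem_spectrum_real i, h0⟩
      rw [spectrum.nonzero_mul_comm] at hmem
      exact hspec _ hmem.1
  -- square roots
  have hmsq₁ : msqrt (1 - (4 * η ^ 2) • (C * Cᵀ)) = hM₁.sqrt := by rw [msqrt, dif_pos hM₁, Matrix.PosSemidef.sqrt]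
  have hmsq₂ : msqrt (1 - (4 * η ^ 2) • (Cᵀ * C)) = hM₂.sqrt := by rw [msqrt, dif_pos hM₂, Matrix.PosSemidef.sqrt]
  set X := hM₁.sqrt with hX
  set Y := hM₂.sqrt with hY
  -- interpolation polynomial
  set s : Finset ℝ := Finset.image hM₁.1.eigenvalues Finset.univ ∪
    Finset.image hM₂.1.eigenvalues Finset.univ with hsdef
  set q : ℝ[X] := Lagrange.interpolate s id Real.sqrt with hqdef
  have hq : ∀ x ∈ s, q.eval x = Real.sqrt x := fun x hx => by
    simpa [hqdef] using Lagrange.eval_interpolate_at_node Real.sqrt (Set.injOn_id _) hx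
  have haeX : aeval (1 - (4 * η ^ 2) • (C * Cᵀ)) q = X :=
    mySqrtEqAeval hM₁ q (fun i => hq _ (by simp [hsdef]))
  have haeY : aeval (1 - (4 * η ^ 2) • (Cᵀ * C)) q = Y :=
    mySqrtEqAeval hM₂ q (fun i => hq _ (by simp [hsdef]))
  have hcomm : C * (1 - (4 * η ^ 2) • (Cᵀ * C)) = (1 - (4 * η ^ 2) • (C * Cᵀ)) * C := by
    rw [mul_sub, sub_mul, mul_one, one_mul, mul_smul_comm, smul_mul_assoc, ← Matrix.mul_assoc]
  have hXC : C * Y = X * C := by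
    rw [← haeX, ← haeY]; exact myAevalIntertwine _ _ _ hcomm q
  have hXsymm : Xᵀ = X := by
    rw [← Matrix.conjTranspose_eq_transpose_of_trivial]; exact hM₁.posSemidef_sqrt.1
  have hYsymm : Yᵀ = Y := by
    rw [← Matrix.conjTranspose_eq_transpose_of_trivial]; exact hM₂.posSemidef_sqrt.1
  have hCtX : Cᵀ * X = Y * Cᵀ := by
    have := congrArg Matrix.transpose hXC
    rw [Matrix.transpose_mul, Matrix.transpose_mul, hXsymm, hYsymm] at this
    exact this.symm
  have hS' : S = fromBlocks X 0 0 Y := by rw [hS, hmsq₁, hmsq₂]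
  -- block identities
  have hJS : J * S = S * J := by
    rw [hJ, hS', Matrix.fromBlocks_multiply, Matrix.fromBlocks_multiply]
    simp [hXC, hCtX, Matrix.neg_mul, Matrix.mul_neg]
  have hSS : S * S = 1 + (4 * η ^ 2) • (J * J) := by
    rw [hJ, hS', Matrix.fromBlocks_multiply, Matrix.fromBlocks_multiply]
    simp only [Matrix.mul_zero, Matrix.zero_mul, add_zero, zero_add, mul_zero, zero_mul,
      Matrix.neg_mul, Matrix.mul_neg, neg_zero]
    have hXX : X * X = 1 - (4 * η ^ 2) • (C * Cᵀ) := hM₁.sqrt_mul_self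
    have hYY : Y * Y = 1 - (4 * η ^ 2) • (Cᵀ * C) := hM₂.sqrt_mul_self
    rw [hXX, hYY, ← Matrix.fromBlocks_one, Matrix.fromBlocks_smul, Matrix.fromBlocks_add]
    refine Matrix.fromBlocks_inj.mpr ⟨by module, by simp, by simp, by module⟩
  -- algebra
  have hA_S : (1 - (2 * η) • J) * S = S * (1 - (2 * η) • J) := by
    rw [sub_mul, mul_sub, one_mul, mul_one, smul_mul_assoc, mul_smul_comm, hJS]
  have hAA : (1 - (2 * η) • J) * (1 - (2 * η) • J)
      = 1 + (-(4 * η)) • J + (4 * η ^ 2) • (J * J) := by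
    rw [sub_mul, mul_sub, mul_sub]
    simp only [one_mul, mul_one, smul_mul_assoc, mul_smul_comm, smul_smul]
    module
  refine ⟨by rw [hR₁, hR₂]; module, ?_, ?_⟩
  · rw [hR₁, hR₂, smul_mul_smul_comm, (myKey _ _ hA_S).1, hAA, hSS]
    module
  · rw [hR₁, hR₂, smul_mul_smul_comm, (myKey _ _ hA_S).2, hAA, hSS]
    module
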